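/- Let n = 2^k be a power of two, let X = (X_1,…,X_n) and Z = (Z_1,…,Z_n) be independent random vectors over F_2, each with i.i.d. coordinates, and set X' = X ⊕ Z (coordinatewise addition over F_2). Let Y = X·G_n, Y' = X'·G_n, and W = Z·G_n. Then for every j ∈ {1,…,n}, H(Y'_j | Y'_1,…,Y'_{j-1}) ≥ H(Y_j | Y_1,…,Y_{j-1}). -/

import Mathlib

open MeasureTheory ProbabilityTheory Filter
open scoped Classical

/-- Shannon entropy (in bits) of a finite-valued random variable `X` on `(Ω, μ)`:
`H(X) = ∑ₓ P(X = x) log₂ (1 / P(X = x))`. -/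
noncomputable def shEnt {Ω : Type*} [MeasurableSpace Ω] (μ : Measure Ω)
    {α : Type*} [Fintype α] (X : Ω → α) : ℝ :=
  (∑ x : α, Real.negMulLog ((μ (X ⁻¹' {x})).toReal)) / Real.log 2

/-- Conditional Shannon entropy (in bits) of discrete random variables:
`H(X | Y) = H(X, Y) - H(Y)`. -/
noncomputable def cEnt {Ω : Type*} [MeasurableSpace Ω] (μ : Measure Ω)
    {α β : Type*} [Fintype α] [Fintype β] (X : Ω → α) (Y : Ω → β) : ℝ :=
  shEnt μ (fun ω => (X ω, Y ω)) - shEnt μ Y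

/-- Shannon entropy (in bits) of a distribution on a finite set. -/
noncomputable def distEnt {α : Type*} [MeasurableSpace α] [Fintype α] (ν : Measure α) : ℝ :=
  (∑ x : α, Real.negMulLog ((ν {x}).toReal)) / Real.log 2

/-- The binary entropy function `h(p) = -p log₂ p - (1-p) log₂ (1-p)`. -/
noncomputable def binEnt (p : ℝ) : ℝ :=
  (Real.negMulLog p + Real.negMulLog (1 - p)) / Real.log 2

/-- The Bernoulli(p) distribution on `F₂` (probability `p` of the outcome `1`). -/
noncomputable def bern (p : ℝ) : Measure (ZMod 2) :=
  ENNReal.ofReal (1 - p) • Measure.dirac 0 + ENNReal.ofReal p • Measure.dirac 1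

/-- `G k` is the `2^k × 2^k` matrix over `F₂` given by the `k`-fold Kronecker power of
`[[1,0],[1,1]]`, in closed form: the `(i,j)` entry is `1` iff each binary digit of `j`
is dominated by the corresponding binary digit of `i` (for the single factor
`[[1,0],[1,1]]`, the `(a,b)` entry is `1` iff the bit `b` is dominated by the bit `a`,
and the Kronecker power multiplies these bitwise conditions). -/
def G (k : ℕ) : Matrix (Fin (2 ^ k)) (Fin (2 ^ k)) (ZMod 2) :=
  Matrix.of fun i j => if j.val &&& i.val = j.val then 1 else 0

lemma core_ineq {α β γ : Type*} [Fintype α] [Fintype β] [Fintype γ]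
    (p : α → β → γ → ℝ) (hp : ∀ a b c, 0 ≤ p a b c) :
    (∑ a, ∑ b, ∑ c, Real.negMulLog (p a b c))
      + ∑ b, Real.negMulLog (∑ a, ∑ c, p a b c)
    ≤ (∑ a, ∑ b, Real.negMulLog (∑ c, p a b c))
      + ∑ b, ∑ c, Real.negMulLog (∑ a, p a b c) := by
  classical
  set pab : α → β → ℝ := fun a b => ∑ c, p a b c with hpabdef
  set pbc : β → γ → ℝ := fun b c => ∑ a, p a b c with hpbcdef
  set pb : β → ℝ := fun b => ∑ a, ∑ c, p a b c with hpbdef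
  have hpab0 : ∀ a b, 0 ≤ pab a b := fun a b => Finset.sum_nonneg fun c _ => hp a b c
  have hpbc0 : ∀ b c, 0 ≤ pbc b c := fun b c => Finset.sum_nonneg fun a _ => hp a b c
  have hpb0 : ∀ b, 0 ≤ pb b := fun b =>
    Finset.sum_nonneg fun a _ => Finset.sum_nonneg fun c _ => hp a b c
  have hple1 : ∀ a b c, p a b c ≤ pab a b := fun a b c =>
    Finset.single_le_sum (fun c _ => hp a b c) (Finset.mem_univ c)
  have hple2 : ∀ a b c, p a b c ≤ pbc b c := fun a b c =>
    Finset.single_le_sum (fun a _ => hp a b c) (Finset.mem_univ a)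
  have hple3 : ∀ a b, pab a b ≤ pb b := fun a b =>
    Finset.single_le_sum (fun a _ => hpab0 a b) (Finset.mem_univ a)
  -- per-term bound
  have key : ∀ a b c, p a b c * (Real.log (pab a b) + Real.log (pbc b c)
      - Real.log (pb b) - Real.log (p a b c)) ≤ pab a b * pbc b c / pb b - p a b c := by
    intro a b c
    rcases eq_or_lt_of_le (hp a b c) with h0 | h0
    · rw [← h0]
      simp only [zero_mul, sub_zero]
      exact div_nonneg (mul_nonneg (hpab0 a b) (hpbc0 b c)) (hpb0 b)
    · have h1 : 0 < pab a b := lt_of_lt_of_le h0 (hple1 a b c)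
      have h2 : 0 < pbc b c := lt_of_lt_of_le h0 (hple2 a b c)
      have h3 : 0 < pb b := lt_of_lt_of_le h1 (hple3 a b)
      have harg : 0 < pab a b * pbc b c / (pb b * p a b c) := by positivity
      have hlog := Real.log_le_sub_one_of_pos harg
      have hlogeq : Real.log (pab a b * pbc b c / (pb b * p a b c))
          = Real.log (pab a b) + Real.log (pbc b c) - Real.log (pb b) - Real.log (p a b c) := by
        rw [Real.log_div (by positivity) (by positivity), Real.log_mul h1.ne' h2.ne',
          Real.log_mul h3.ne' h0.ne']
        ring
      calc p a b c * (Real.log (pab a b) + Real.log (pbc b c)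
              - Real.log (pb b) - Real.log (p a b c))
          = p a b c * Real.log (pab a b * pbc b c / (pb b * p a b c)) := by rw [hlogeq]
        _ ≤ p a b c * (pab a b * pbc b c / (pb b * p a b c) - 1) :=
            mul_le_mul_of_nonneg_left hlog h0.le
        _ = pab a b * pbc b c / pb b - p a b c := by
            field_simp
  -- sum of the upper bounds is ≤ 0
  have h1 : ∀ b, ∑ a, ∑ c, (pab a b * pbc b c / pb b - p a b c) ≤ 0 := by
    intro b
    have hS : ∑ c, pbc b c = pb b := by
      rw [hpbcdef, hpbdef]
      exact Finset.sum_comm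
    have hA : ∑ a, pab a b = pb b := rfl
    have e1 : ∑ a, ∑ c, (pab a b * pbc b c / pb b - p a b c)
        = ((∑ a, pab a b) / pb b) * pb b - pb b := by
      calc ∑ a, ∑ c, (pab a b * pbc b c / pb b - p a b c)
          = (∑ a, ∑ c, pab a b * pbc b c / pb b) - ∑ a, ∑ c, p a b c := by
            simp [Finset.sum_sub_distrib]
        _ = ((∑ a, pab a b) / pb b) * pb b - pb b := by
            congr 1
            calc ∑ a, ∑ c, pab a b * pbc b c / pb b
                = ∑ a, (pab a b / pb b * ∑ c, pbc b c) := by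
                  refine Finset.sum_congr rfl fun a _ => ?_
                  rw [Finset.mul_sum]
                  exact Finset.sum_congr rfl fun c _ => by ring
              _ = ((∑ a, pab a b) / pb b) * pb b := by
                  rw [hS, ← Finset.sum_mul, ← Finset.sum_div]
    rw [e1, hA]
    rcases eq_or_ne (pb b) 0 with h | h
    · simp [h]
    · rw [div_mul_cancel₀ _ h]
      simp
  have sumbound : ∑ b, ∑ a, ∑ c, (pab a b * pbc b c / pb b - p a b c) ≤ 0 :=
    Finset.sum_nonpos fun b _ => h1 b
  -- expansion of entropies into triple sums
  have E1 : ∑ a, ∑ b, ∑ c, Real.negMulLog (p a b c)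
      = ∑ b, ∑ a, ∑ c, -(p a b c * Real.log (p a b c)) := by
    rw [Finset.sum_comm]
    simp [Real.negMulLog, neg_mul]
  have E2 : ∑ b, Real.negMulLog (pb b)
      = ∑ b, ∑ a, ∑ c, -(p a b c * Real.log (pb b)) := by
    refine Finset.sum_congr rfl fun b _ => ?_
    have : Real.negMulLog (pb b) = -((∑ a, ∑ c, p a b c) * Real.log (pb b)) := by
      simp [Real.negMulLog, hpbdef, neg_mul]
    rw [this, Finset.sum_mul]
    simp [Finset.sum_mul]
  have E3 : ∑ a, ∑ b, Real.negMulLog (pab a b)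
      = ∑ b, ∑ a, ∑ c, -(p a b c * Real.log (pab a b)) := by
    rw [Finset.sum_comm]
    refine Finset.sum_congr rfl fun b _ => Finset.sum_congr rfl fun a _ => ?_
    have : Real.negMulLog (pab a b) = -((∑ c, p a b c) * Real.log (pab a b)) := by
      simp [Real.negMulLog, hpabdef, neg_mul]
    rw [this, Finset.sum_mul]
    simp
  have E4 : ∑ b, ∑ c, Real.negMulLog (pbc b c)
      = ∑ b, ∑ a, ∑ c, -(p a b c * Real.log (pbc b c)) := by
    refine Finset.sum_congr rfl fun b _ => ?_
    rw [Finset.sum_comm]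
    refine Finset.sum_congr rfl fun c _ => ?_
    have : Real.negMulLog (pbc b c) = -((∑ a, p a b c) * Real.log (pbc b c)) := by
      simp [Real.negMulLog, hpbcdef, neg_mul]
    rw [this, Finset.sum_mul]
    simp
  have expand : (∑ a, ∑ b, ∑ c, Real.negMulLog (p a b c)) + (∑ b, Real.negMulLog (pb b))
      - ((∑ a, ∑ b, Real.negMulLog (pab a b)) + ∑ b, ∑ c, Real.negMulLog (pbc b c))
      = ∑ b, ∑ a, ∑ c, p a b c * (Real.log (pab a b) + Real.log (pbc b c)
          - Real.log (pb b) - Real.log (p a b c)) := by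
    rw [E1, E2, E3, E4]
    rw [← Finset.sum_add_distrib, ← Finset.sum_add_distrib, ← Finset.sum_sub_distrib]
    refine Finset.sum_congr rfl fun b _ => ?_
    rw [← Finset.sum_add_distrib, ← Finset.sum_add_distrib, ← Finset.sum_sub_distrib]
    refine Finset.sum_congr rfl fun a _ => ?_
    rw [← Finset.sum_add_distrib, ← Finset.sum_add_distrib, ← Finset.sum_sub_distrib]
    exact Finset.sum_congr rfl fun c _ => by ring
  have final : ∑ b, ∑ a, ∑ c, p a b c * (Real.log (pab a b) + Real.log (pbc b c)
      - Real.log (pb b) - Real.log (p a b c)) ≤ 0 := by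
    refine le_trans (Finset.sum_le_sum fun b _ => Finset.sum_le_sum fun a _ =>
      Finset.sum_le_sum fun c _ => key a b c) sumbound
  linarith [expand, final]

section helpers
variable {Ω : Type*} [MeasurableSpace Ω] {μ : Measure Ω}

lemma meas_sum_fiber [IsProbabilityMeasure μ] {ε : Type*} [Fintype ε]
    [MeasurableSpace ε] [MeasurableSingletonClass ε]
    {s : Set Ω} (hs : MeasurableSet s) {g : Ω → ε} (hg : Measurable g) :
    (μ s).toReal = ∑ e : ε, (μ (s ∩ g ⁻¹' {e})).toReal := by
  rw [← ENNReal.toReal_sum (fun e _ => measure_ne_top μ _)]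
  congr 1
  rw [← measure_biUnion_finset (s := (Finset.univ : Finset ε))
      (f := fun e => s ∩ g ⁻¹' {e}) ?_ ?_]
  · congr 1
    ext ω
    simp
  · intro a _ b _ hab
    apply Set.disjoint_left.2
    rintro ω ⟨_, h1⟩ ⟨_, h2⟩
    simp only [Set.mem_preimage, Set.mem_singleton_iff] at h1 h2
    exact hab (h1 ▸ h2 ▸ rfl)
  · intro b _
    exact hs.inter (hg (measurableSet_singleton b))

lemma shEnt_comp_equiv {α β : Type*} [Fintype α] [Fintype β]
    (e : α ≃ β) (V : Ω → α) (U : Ω → β) (h : ∀ ω, U ω = e (V ω)) :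
    shEnt μ U = shEnt μ V := by
  unfold shEnt
  congr 1
  rw [← Equiv.sum_comp e (fun b => Real.negMulLog ((μ (U ⁻¹' {b})).toReal))]
  refine Finset.sum_congr rfl fun a _ => ?_
  congr 3
  ext ω
  simp only [Set.mem_preimage, Set.mem_singleton_iff, h ω]
  exact e.injective.eq_iff

lemma shEnt_pair_of_indep [IsProbabilityMeasure μ] {α β : Type*} [Fintype α] [Fintype β]
    [MeasurableSpace α] [MeasurableSingletonClass α]
    [MeasurableSpace β] [MeasurableSingletonClass β]
    {U : Ω → α} {V : Ω → β} (hU : Measurable U) (hV : Measurable V)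
    (h : IndepFun U V μ) :
    shEnt μ (fun ω => (U ω, V ω)) = shEnt μ U + shEnt μ V := by
  have hprod : ∀ u v, (μ ((fun ω => (U ω, V ω)) ⁻¹' {(u, v)})).toReal
      = (μ (U ⁻¹' {u})).toReal * (μ (V ⁻¹' {v})).toReal := by
    intro u v
    have h1 : (fun ω => (U ω, V ω)) ⁻¹' {(u, v)} = U ⁻¹' {u} ∩ V ⁻¹' {v} := by
      ext ω; simp [Prod.ext_iff]
    rw [h1, h.measure_inter_preimage_eq_mul _ _ (measurableSet_singleton u)
      (measurableSet_singleton v), ENNReal.toReal_mul]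
  have hsU : ∑ u, (μ (U ⁻¹' {u})).toReal = 1 := by
    have := meas_sum_fiber (μ := μ) (s := Set.univ) MeasurableSet.univ hU
    simpa [measure_univ] using this.symm
  have hsV : ∑ v, (μ (V ⁻¹' {v})).toReal = 1 := by
    have := meas_sum_fiber (μ := μ) (s := Set.univ) MeasurableSet.univ hV
    simpa [measure_univ] using this.symm
  unfold shEnt
  rw [← add_div]
  congr 1
  rw [Fintype.sum_prod_type]
  calc ∑ u, ∑ v, Real.negMulLog ((μ ((fun ω => (U ω, V ω)) ⁻¹' {(u, v)})).toReal)
      = ∑ u, ∑ v, ((μ (V ⁻¹' {v})).toReal * Real.negMulLog ((μ (U ⁻¹' {u})).toReal)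
          + (μ (U ⁻¹' {u})).toReal * Real.negMulLog ((μ (V ⁻¹' {v})).toReal)) := by
        refine Finset.sum_congr rfl fun u _ => Finset.sum_congr rfl fun v _ => ?_
        rw [hprod, Real.negMulLog_mul]
    _ = ∑ u, ((∑ v, (μ (V ⁻¹' {v})).toReal) * Real.negMulLog ((μ (U ⁻¹' {u})).toReal)
          + (μ (U ⁻¹' {u})).toReal * ∑ v, Real.negMulLog ((μ (V ⁻¹' {v})).toReal)) := by
        refine Finset.sum_congr rfl fun u _ => ?_
        rw [Finset.sum_add_distrib, ← Finset.sum_mul, ← Finset.mul_sum]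
    _ = ∑ u, Real.negMulLog ((μ (U ⁻¹' {u})).toReal)
          + ∑ v, Real.negMulLog ((μ (V ⁻¹' {v})).toReal) := by
        rw [Finset.sum_add_distrib]
        rw [hsV]
        simp only [one_mul]
        congr 1
        rw [← Finset.sum_mul, hsU, one_mul]

end helpers

section cent
variable {Ω : Type*} [MeasurableSpace Ω] {μ : Measure Ω}

lemma cEnt_cond_pair_le [IsProbabilityMeasure μ]
    {α β γ : Type*} [Fintype α] [Fintype β] [Fintype γ]
    [MeasurableSpace α] [MeasurableSingletonClass α]
    [MeasurableSpace β] [MeasurableSingletonClass β]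
    [MeasurableSpace γ] [MeasurableSingletonClass γ]
    {A : Ω → α} {B : Ω → β} {C : Ω → γ}
    (hA : Measurable A) (hB : Measurable B) (hC : Measurable C) :
    cEnt μ A (fun ω => (B ω, C ω)) ≤ cEnt μ A B := by
  classical
  set q : α → β → γ → ℝ :=
    fun a b c => (μ (A ⁻¹' {a} ∩ B ⁻¹' {b} ∩ C ⁻¹' {c})).toReal with hq
  have hq0 : ∀ a b c, 0 ≤ q a b c := fun a b c => ENNReal.toReal_nonneg
  -- joint of (A,(B,C))
  have I1 : shEnt μ (fun ω => (A ω, (B ω, C ω)))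
      = (∑ a, ∑ b, ∑ c, Real.negMulLog (q a b c)) / Real.log 2 := by
    unfold shEnt
    congr 1
    rw [Fintype.sum_prod_type]
    refine Finset.sum_congr rfl fun a _ => ?_
    rw [Fintype.sum_prod_type]
    refine Finset.sum_congr rfl fun b _ => Finset.sum_congr rfl fun c _ => ?_
    congr 3
    ext ω
    simp [Prod.ext_iff, and_assoc]
  -- (A,B): marginalize over c
  have I2 : shEnt μ (fun ω => (A ω, B ω))
      = (∑ a, ∑ b, Real.negMulLog (∑ c, q a b c)) / Real.log 2 := by
    unfold shEnt
    congr 1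
    rw [Fintype.sum_prod_type]
    refine Finset.sum_congr rfl fun a _ => Finset.sum_congr rfl fun b _ => ?_
    congr 1
    have hset : (fun ω => (A ω, B ω)) ⁻¹' {(a, b)} = A ⁻¹' {a} ∩ B ⁻¹' {b} := by
      ext ω; simp [Prod.ext_iff]
    rw [hset, meas_sum_fiber ((hA (measurableSet_singleton a)).inter
      (hB (measurableSet_singleton b))) hC]
  -- (B,C): marginalize over a
  have I3 : shEnt μ (fun ω => (B ω, C ω))
      = (∑ b, ∑ c, Real.negMulLog (∑ a, q a b c)) / Real.log 2 := by
    unfold shEnt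
    congr 1
    rw [Fintype.sum_prod_type]
    refine Finset.sum_congr rfl fun b _ => Finset.sum_congr rfl fun c _ => ?_
    congr 1
    have hset : (fun ω => (B ω, C ω)) ⁻¹' {(b, c)} = B ⁻¹' {b} ∩ C ⁻¹' {c} := by
      ext ω; simp [Prod.ext_iff]
    rw [hset, meas_sum_fiber ((hB (measurableSet_singleton b)).inter
      (hC (measurableSet_singleton c))) hA]
    refine Finset.sum_congr rfl fun a _ => ?_
    congr 2
    ext ω
    simp only [Set.mem_inter_iff, Set.mem_preimage, Set.mem_singleton_iff]
    tauto
  -- B alone: marginalize over a and c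
  have I4 : shEnt μ B
      = (∑ b, Real.negMulLog (∑ a, ∑ c, q a b c)) / Real.log 2 := by
    unfold shEnt
    congr 1
    refine Finset.sum_congr rfl fun b _ => ?_
    congr 1
    rw [meas_sum_fiber (hB (measurableSet_singleton b)) hA]
    refine Finset.sum_congr rfl fun a _ => ?_
    rw [meas_sum_fiber ((hB (measurableSet_singleton b)).inter
      (hA (measurableSet_singleton a))) hC]
    refine Finset.sum_congr rfl fun c _ => ?_
    congr 2
    ext ω
    simp only [Set.mem_inter_iff, Set.mem_preimage, Set.mem_singleton_iff]
    tauto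
  unfold cEnt
  rw [I1, I2, I3, I4]
  rw [div_sub_div_same, div_sub_div_same]
  have h2 : (0:ℝ) < Real.log 2 := Real.log_pos one_lt_two
  apply div_le_div_of_nonneg_right ?_ h2.le
  linarith [core_ineq q hq0]

lemma cEnt_cond_indep [IsProbabilityMeasure μ]
    {α β γ : Type*} [Fintype α] [Fintype β] [Fintype γ]
    [MeasurableSpace α] [MeasurableSingletonClass α]
    [MeasurableSpace β] [MeasurableSingletonClass β]
    [MeasurableSpace γ] [MeasurableSingletonClass γ]
    {A : Ω → α} {B : Ω → β} {C : Ω → γ}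
    (hA : Measurable A) (hB : Measurable B) (hC : Measurable C)
    (h : IndepFun (fun ω => (A ω, B ω)) C μ) :
    cEnt μ A (fun ω => (B ω, C ω)) = cEnt μ A B := by
  have hBC : IndepFun B C μ := by
    have := h.comp (measurable_snd (α := α) (β := β)) measurable_id
    exact this
  have h1 : shEnt μ (fun ω => (B ω, C ω)) = shEnt μ B + shEnt μ C :=
    shEnt_pair_of_indep hB hC hBC
  have h2 : shEnt μ (fun ω => (A ω, (B ω, C ω)))
      = shEnt μ (fun ω => (A ω, B ω)) + shEnt μ C := by
    have e1 : shEnt μ (fun ω => (A ω, (B ω, C ω)))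
        = shEnt μ (fun ω => ((A ω, B ω), C ω)) :=
      shEnt_comp_equiv (Equiv.prodAssoc α β γ)
        (fun ω => ((A ω, B ω), C ω)) _ (fun ω => rfl)
    rw [e1]
    exact shEnt_pair_of_indep (hA.prodMk hB) hC h
  unfold cEnt
  rw [h1, h2]
  ring

end cent

set_option maxHeartbeats 1000000 in
/-- adding i.i.d. noise increases the polarized conditional entropies:
for `X, Z` independent with i.i.d. coordinates, `X' = X ⊕ Z`, `Y = X ⬝ G_n`,
`Y' = X' ⬝ G_n`, one has `H(Y'_j | Y'^{j-1}) ≥ H(Y_j | Y^{j-1})` for every `j`. -/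
theorem statement17 (k : ℕ)
    (Ω : Type) [MeasurableSpace Ω] (μ : Measure Ω) [IsProbabilityMeasure μ]
    (X Z : Ω → Fin (2 ^ k) → ZMod 2) (hX : Measurable X) (hZ : Measurable Z)
    (hindep : IndepFun X Z μ)
    (νx νz : Measure (ZMod 2)) [IsProbabilityMeasure νx] [IsProbabilityMeasure νz]
    (hiidX : μ.map X = Measure.pi fun _ : Fin (2 ^ k) => νx)
    (hiidZ : μ.map Z = Measure.pi fun _ : Fin (2 ^ k) => νz)
    (j : Fin (2 ^ k)) :
    cEnt μ (fun ω => Matrix.vecMul (X ω) (G k) j)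
        (fun ω (i : Fin j.val) => Matrix.vecMul (X ω) (G k) (i.castLE j.isLt.le))
      ≤ cEnt μ (fun ω => Matrix.vecMul (fun l => X ω l + Z ω l) (G k) j)
          (fun ω (i : Fin j.val) =>
            Matrix.vecMul (fun l => X ω l + Z ω l) (G k) (i.castLE j.isLt.le)) := by
  classical
  -- rewrite the noisy variables as clean + noise
  have hA' : (fun ω => Matrix.vecMul (fun l => X ω l + Z ω l) (G k) j)
      = fun ω => Matrix.vecMul (X ω) (G k) j + Matrix.vecMul (Z ω) (G k) j := by
    funext ω
    show Matrix.vecMul (X ω + Z ω) (G k) j = _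
    rw [Matrix.add_vecMul]
    rfl
  have hB' : (fun ω (i : Fin j.val) =>
        Matrix.vecMul (fun l => X ω l + Z ω l) (G k) (i.castLE j.isLt.le))
      = fun ω (i : Fin j.val) => Matrix.vecMul (X ω) (G k) (i.castLE j.isLt.le)
          + Matrix.vecMul (Z ω) (G k) (i.castLE j.isLt.le) := by
    funext ω i
    show Matrix.vecMul (X ω + Z ω) (G k) _ = _
    rw [Matrix.add_vecMul]
    rfl
  rw [hA', hB']
  -- measurability
  have hAm : Measurable (fun ω => Matrix.vecMul (X ω) (G k) j) :=
    (measurable_of_countable (fun x : Fin (2 ^ k) → ZMod 2 => Matrix.vecMul x (G k) j)).comp hX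
  have hBm : Measurable (fun ω (i : Fin j.val) =>
      Matrix.vecMul (X ω) (G k) (i.castLE j.isLt.le)) :=
    (measurable_of_countable (fun x : Fin (2 ^ k) → ZMod 2 =>
      fun i : Fin j.val => Matrix.vecMul x (G k) (i.castLE j.isLt.le))).comp hX
  have hA''m : Measurable (fun ω => Matrix.vecMul (X ω) (G k) j
      + Matrix.vecMul (Z ω) (G k) j) :=
    hAm.add ((measurable_of_countable
      (fun x : Fin (2 ^ k) → ZMod 2 => Matrix.vecMul x (G k) j)).comp hZ)
  have hB''m : Measurable (fun ω (i : Fin j.val) =>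
      Matrix.vecMul (X ω) (G k) (i.castLE j.isLt.le)
        + Matrix.vecMul (Z ω) (G k) (i.castLE j.isLt.le)) := by
    apply measurable_pi_lambda
    intro i
    exact ((measurable_of_countable (fun x : Fin (2 ^ k) → ZMod 2 =>
        Matrix.vecMul x (G k) (i.castLE j.isLt.le))).comp hX).add
      ((measurable_of_countable (fun x : Fin (2 ^ k) → ZMod 2 =>
        Matrix.vecMul x (G k) (i.castLE j.isLt.le))).comp hZ)
  -- independence of (Y_j, Y^{<j}) from Z
  have hIndep : IndepFun (fun ω => (Matrix.vecMul (X ω) (G k) j,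
      fun i : Fin j.val => Matrix.vecMul (X ω) (G k) (i.castLE j.isLt.le))) Z μ := by
    have := hindep.comp (measurable_of_countable
      (fun x : Fin (2 ^ k) → ZMod 2 => (Matrix.vecMul x (G k) j,
        fun i : Fin j.val => Matrix.vecMul x (G k) (i.castLE j.isLt.le)))) measurable_id
    exact this
  -- the XOR involutions
  set f1 : ZMod 2 × ((Fin j.val → ZMod 2) × (Fin (2 ^ k) → ZMod 2))
      → ZMod 2 × ((Fin j.val → ZMod 2) × (Fin (2 ^ k) → ZMod 2)) :=
    fun p => (p.1 + Matrix.vecMul p.2.2 (G k) j,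
      (fun i => p.2.1 i + Matrix.vecMul p.2.2 (G k) (i.castLE j.isLt.le), p.2.2)) with hf1def
  have hf1 : Function.Involutive f1 := by
    rintro ⟨y, v, z⟩
    simp only [hf1def]
    refine Prod.ext ?_ (Prod.ext ?_ rfl)
    · show y + _ + _ = y
      rw [add_assoc, CharTwo.add_self_eq_zero, add_zero]
    · funext i
      show v i + _ + _ = v i
      rw [add_assoc, CharTwo.add_self_eq_zero, add_zero]
  set f2 : (Fin j.val → ZMod 2) × (Fin (2 ^ k) → ZMod 2)
      → (Fin j.val → ZMod 2) × (Fin (2 ^ k) → ZMod 2) :=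
    fun p => (fun i => p.1 i + Matrix.vecMul p.2 (G k) (i.castLE j.isLt.le), p.2) with hf2def
  have hf2 : Function.Involutive f2 := by
    rintro ⟨v, z⟩
    simp only [hf2def]
    refine Prod.ext ?_ rfl
    funext i
    show v i + _ + _ = v i
    rw [add_assoc, CharTwo.add_self_eq_zero, add_zero]
  -- step 2: XOR invariance of the conditional entropy given Z
  have step2 : cEnt μ (fun ω => Matrix.vecMul (X ω) (G k) j + Matrix.vecMul (Z ω) (G k) j)
      (fun ω => ((fun i : Fin j.val => Matrix.vecMul (X ω) (G k) (i.castLE j.isLt.le)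
        + Matrix.vecMul (Z ω) (G k) (i.castLE j.isLt.le)), Z ω))
      = cEnt μ (fun ω => Matrix.vecMul (X ω) (G k) j)
        (fun ω => ((fun i : Fin j.val => Matrix.vecMul (X ω) (G k) (i.castLE j.isLt.le)), Z ω)) := by
    unfold cEnt
    congr 1
    · exact shEnt_comp_equiv (Function.Involutive.toPerm f1 hf1)
        (fun ω => (Matrix.vecMul (X ω) (G k) j,
          ((fun i : Fin j.val => Matrix.vecMul (X ω) (G k) (i.castLE j.isLt.le)), Z ω)))
        _ (fun ω => rfl)
    · exact shEnt_comp_equiv (Function.Involutive.toPerm f2 hf2)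
        (fun ω => ((fun i : Fin j.val => Matrix.vecMul (X ω) (G k) (i.castLE j.isLt.le)), Z ω))
        _ (fun ω => rfl)
  calc cEnt μ (fun ω => Matrix.vecMul (X ω) (G k) j)
        (fun ω (i : Fin j.val) => Matrix.vecMul (X ω) (G k) (i.castLE j.isLt.le))
      = cEnt μ (fun ω => Matrix.vecMul (X ω) (G k) j)
          (fun ω => ((fun i : Fin j.val => Matrix.vecMul (X ω) (G k) (i.castLE j.isLt.le)), Z ω)) :=
        (cEnt_cond_indep hAm hBm hZ hIndep).symm
    _ = cEnt μ (fun ω => Matrix.vecMul (X ω) (G k) j + Matrix.vecMul (Z ω) (G k) j)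
          (fun ω => ((fun i : Fin j.val => Matrix.vecMul (X ω) (G k) (i.castLE j.isLt.le)
            + Matrix.vecMul (Z ω) (G k) (i.castLE j.isLt.le)), Z ω)) := step2.symm
    _ ≤ cEnt μ (fun ω => Matrix.vecMul (X ω) (G k) j + Matrix.vecMul (Z ω) (G k) j)
          (fun ω (i : Fin j.val) => Matrix.vecMul (X ω) (G k) (i.castLE j.isLt.le)
            + Matrix.vecMul (Z ω) (G k) (i.castLE j.isLt.le)) :=
        cEnt_cond_pair_le hA''m hB''m hZ
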